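/- If M has rank 1, i.e. (up to a permutation of indices) R₃ = 0, w₄ = w₅ = 0, w₃² = -R₄R₅ with (R₄,R₅) ≠ (0,0), then R₄ ≠ R₅ and det Ω = -(1/16)(R₄-R₅)⁴ ≠ 0, so rank(Ω) = 4. -/

import Mathlib

open Matrix

/-- If `M` has rank 1, i.e. `R₃ = 0`, `w₄ = w₅ = 0`, `w₃² = -R₄R₅` with
`(R₄, R₅) ≠ (0,0)`, then `R₄ ≠ R₅`, `det Ω = -(1/16)(R₄ - R₅)⁴ ≠ 0`, and `rank Ω = 4`. -/
theorem stmt14 (R3 R4 R5 w3 w4 w5 R : ℝ) (hR : R = R3 + R4 + R5)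
    (hR3 : R3 = 0) (hw4 : w4 = 0) (hw5 : w5 = 0)
    (hw3 : w3 ^ 2 = -(R4 * R5))
    (hnz : ¬ (R4 = 0 ∧ R5 = 0))
    (Om : Matrix (Fin 4) (Fin 4) ℝ)
    (hOm : Om = !![R/2, -w3, -w4, -w5;
                   w3, R/2 - R3, 0, 0;
                   w4, 0, R/2 - R4, 0;
                   w5, 0, 0, R/2 - R5]) :
    R4 ≠ R5 ∧ Om.det = -(1/16) * (R4 - R5) ^ 4 ∧ Om.det ≠ 0 ∧ Om.rank = 4 := by
  have hne : R4 ≠ R5 := by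
    intro h
    apply hnz
    have h4 : R4 = 0 := by nlinarith [sq_nonneg w3]
    exact ⟨h4, h ▸ h4⟩
  have hdet : Om.det = -(1/16) * (R4 - R5) ^ 4 := by
    subst hOm hR hR3 hw4 hw5
    simp [Matrix.det_succ_row_zero, Fin.sum_univ_succ, Fin.succAbove]
    linear_combination (((R4 + R5) / 2 - R4) * ((R4 + R5) / 2 - R5)) * hw3
  have hdne : Om.det ≠ 0 := by
    rw [hdet]
    have : R4 - R5 ≠ 0 := sub_ne_zero.mpr hne
    positivity
  refine ⟨hne, hdet, hdne, ?_⟩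
  have := Matrix.rank_of_isUnit Om (Matrix.isUnit_iff_isUnit_det Om |>.mpr (isUnit_iff_ne_zero.mpr hdne))
  simpa using this
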